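/- Let f: X → B be a semistable fibration. Then there is an inclusion of sheaves D ↪ K_∂; that is, every relative 1-form liftable to a d-closed holomorphic 1-form on X is liftable to a holomorphic 1-form on X. -/
import Mathlib


/-!
# Statement 2

Let `f : X → B` be a semistable fibration.  Then there is an inclusion of sheaves
`D ↪ K_∂`: every relative 1-form liftable to a d-closed holomorphic 1-form on `X` is
liftable to a holomorphic 1-form on `X`.

We formalize this in the abelian category `𝒜` of sheaves of `𝒪_B`-modules on `B`.
Here:
* `ι : ω_B ⟶ f_*Ω¹_{X,d}` is the natural map into the pushforward of the sheaf
  of d-closed holomorphic 1-forms, and `D` is by definition its cokernel;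
* `incl : f_*Ω¹_{X,d} ⟶ f_*Ω¹_X` is the (mono) inclusion of closed forms;
* `π : f_*Ω¹_X ⟶ f_*Ω¹_{X/B}` and `d = ∂ : f_*Ω¹_{X/B} ⟶ R¹f_*𝒪_X ⊗ ω_B` come from
  the pushforward of `0 → f^*ω_B → Ω¹_X → Ω¹_{X/B} → 0`, so that `K_∂ = ker ∂` and
  `0 → ω_B → f_*Ω¹_X → f_*Ω¹_{X/B}` is exact.
The natural map `D = coker ι ⟶ K_∂ = ker ∂` is induced by `incl ≫ π`, and the
conclusion is that it is a monomorphism.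
-/

open CategoryTheory Limits

theorem statement_2
    (𝒜 : Type*) [Category 𝒜] [Abelian 𝒜]
    (ωB Md M ΩXB R1 : 𝒜)  -- ω_B, f_*Ω¹_{X,d}, f_*Ω¹_X, f_*Ω¹_{X/B}, R¹f_*𝒪_X ⊗ ω_B
    (ι : ωB ⟶ Md)         -- ω_B → f_*Ω¹_{X,d};  D := coker ι
    (incl : Md ⟶ M)       -- f_*Ω¹_{X,d} ↪ f_*Ω¹_X
    (π : M ⟶ ΩXB)         -- f_*Ω¹_X → f_*Ω¹_{X/B}
    (d : ΩXB ⟶ R1)        -- the connecting morphism ∂;  K_∂ := ker ∂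
    [Mono ι] [Mono incl]
    -- exactness of 0 → ω_B → f_*Ω¹_X → f_*Ω¹_{X/B} (pushforward left exactness)
    (w1 : (ι ≫ incl) ≫ π = 0)
    (hexact : (ShortComplex.mk (ι ≫ incl) π w1).Exact)
    -- closed relative forms are liftable:  (incl ≫ π) ≫ ∂ = 0
    (w2 : (incl ≫ π) ≫ d = 0)
    (hz : ι ≫ kernel.lift d (incl ≫ π) w2 = 0) :
    -- conclusion: the induced map D = coker ι ⟶ K_∂ = ker ∂ is a monomorphism
    Mono (cokernel.desc ι (kernel.lift d (incl ≫ π) w2) hz) := by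
  apply Abelian.Pseudoelement.mono_of_zero_of_map_zero
  intro x hx
  obtain ⟨y, rfl⟩ := Abelian.Pseudoelement.pseudo_surjective_of_epi (cokernel.π ι) x
  rw [← Abelian.Pseudoelement.comp_apply, cokernel.π_desc] at hx
  have h1 : Abelian.Pseudoelement.pseudoApply (kernel.ι d)
      (Abelian.Pseudoelement.pseudoApply (kernel.lift d (incl ≫ π) w2) y) = 0 := by
    rw [hx, Abelian.Pseudoelement.apply_zero]
  rw [← Abelian.Pseudoelement.comp_apply, kernel.lift_ι,
    Abelian.Pseudoelement.comp_apply] at h1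
  obtain ⟨z, hzz⟩ := Abelian.Pseudoelement.pseudo_exact_of_exact
    (S := ShortComplex.mk (ι ≫ incl) π w1) hexact
    (Abelian.Pseudoelement.pseudoApply incl y) h1
  rw [show (ShortComplex.mk (ι ≫ incl) π w1).f = ι ≫ incl from rfl,
    Abelian.Pseudoelement.comp_apply] at hzz
  have hy : Abelian.Pseudoelement.pseudoApply ι z = y :=
    Abelian.Pseudoelement.pseudo_injective_of_mono incl hzz
  rw [← hy, ← Abelian.Pseudoelement.comp_apply, cokernel.condition,
    Abelian.Pseudoelement.zero_apply]
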